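/- Hoeffding's maximal inequality: let X_1, …, X_n be i.i.d. random variables with mean μ and a ≤ X_i ≤ b almost surely. Then for any t > 0, the probability that there exists i ∈ {1,…,n} with X_1 + ⋯ + X_i ≥ iμ + t is at most exp(−2t²/(n(b−a)²)). -/

import Mathlib

open MeasureTheory ProbabilityTheory Real

section AuxHoeffding

lemma hD_pos (p : ℝ) (hp0 : 0 ≤ p) (hp1 : p ≤ 1) (x : ℝ) :
    0 < 1 - p + p * Real.exp x := by
  rcases lt_or_ge p 1 with h | h
  · have : 0 ≤ p * Real.exp x := mul_nonneg hp0 (exp_pos x).le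
    linarith
  · have hp : p = 1 := le_antisymm hp1 h
    subst hp
    simpa using exp_pos x

lemma aux_log_le (p : ℝ) (hp0 : 0 ≤ p) (hp1 : p ≤ 1) (h : ℝ) :
    Real.log (1 - p + p * Real.exp h) ≤ p * h + h ^ 2 / 8 := by
  set F : ℝ → ℝ := fun x => x ^ 2 / 8 + p * x - Real.log (1 - p + p * Real.exp x) with hF
  set F' : ℝ → ℝ := fun x => x / 4 + p - p * Real.exp x / (1 - p + p * Real.exp x) with hF'
  have hD : ∀ x : ℝ, 0 < 1 - p + p * Real.exp x := hD_pos p hp0 hp1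
  have hder : ∀ x : ℝ, HasDerivAt F (F' x) x := by
    intro x
    have h1 : HasDerivAt (fun x : ℝ => x ^ 2 / 8) (x / 4) x := by
      have := (hasDerivAt_pow 2 x).div_const 8
      exact this.congr_deriv (by ring)
    have h2 : HasDerivAt (fun x : ℝ => p * x) p x := by
      simpa using (hasDerivAt_id x).const_mul p
    have h3 : HasDerivAt (fun x : ℝ => 1 - p + p * Real.exp x) (p * Real.exp x) x := by
      simpa using ((Real.hasDerivAt_exp x).const_mul p).const_add (1 - p)
    have h4 : HasDerivAt (fun x : ℝ => Real.log (1 - p + p * Real.exp x))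
        (p * Real.exp x / (1 - p + p * Real.exp x)) x := h3.log (hD x).ne'
    exact (h1.add h2).sub h4
  have hder' : ∀ x : ℝ, HasDerivAt F'
      (1 / 4 - p * Real.exp x * (1 - p) / (1 - p + p * Real.exp x) ^ 2) x := by
    intro x
    have h1 : HasDerivAt (fun x : ℝ => x / 4 + p) (1 / 4) x := by
      simpa using ((hasDerivAt_id x).div_const 4).add_const p
    have h3 : HasDerivAt (fun x : ℝ => 1 - p + p * Real.exp x) (p * Real.exp x) x := by
      simpa using ((Real.hasDerivAt_exp x).const_mul p).const_add (1 - p)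
    have h2 : HasDerivAt (fun x : ℝ => p * Real.exp x) (p * Real.exp x) x :=
      (Real.hasDerivAt_exp x).const_mul p
    have h4 := h2.div h3 (hD x).ne'
    have : HasDerivAt F' (1 / 4 -
        (p * Real.exp x * (1 - p + p * Real.exp x) - p * Real.exp x * (p * Real.exp x)) /
          (1 - p + p * Real.exp x) ^ 2) x := h1.sub h4
    convert this using 1; ring
  have hF''nonneg : ∀ x : ℝ,
      0 ≤ 1 / 4 - p * Real.exp x * (1 - p) / (1 - p + p * Real.exp x) ^ 2 := by
    intro x
    rw [sub_nonneg, div_le_iff₀ (pow_pos (hD x) 2)]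
    nlinarith [sq_nonneg (1 - p - p * Real.exp x)]
  have hmonoF' : Monotone F' := by
    have hdiff : Differentiable ℝ F' := fun x => (hder' x).differentiableAt
    refine monotone_of_deriv_nonneg hdiff fun x => ?_
    rw [(hder' x).deriv]; exact hF''nonneg x
  have hF'0 : F' 0 = 0 := by simp [hF']
  have hF0 : F 0 = 0 := by simp [hF]
  have key : 0 ≤ F h := by
    rcases le_or_gt 0 h with hh | hh
    · have hmono : MonotoneOn F (Set.Ici (0:ℝ)) := by
        refine monotoneOn_of_deriv_nonneg (convex_Ici 0)
          (fun x _ => (hder x).differentiableAt.continuousAt.continuousWithinAt)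
          (fun x _ => (hder x).differentiableAt.differentiableWithinAt)
          (fun x hx => ?_)
        rw [(hder x).deriv, ← hF'0]
        exact hmonoF' (le_of_lt (by simpa using hx))
      have := hmono (Set.self_mem_Ici) (Set.mem_Ici.2 hh) hh
      linarith [hF0 ▸ this]
    · have hmono : AntitoneOn F (Set.Iic (0:ℝ)) := by
        refine antitoneOn_of_deriv_nonpos (convex_Iic 0)
          (fun x _ => (hder x).differentiableAt.continuousAt.continuousWithinAt)
          (fun x _ => (hder x).differentiableAt.differentiableWithinAt)
          (fun x hx => ?_)
        rw [(hder x).deriv, ← hF'0]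
        exact hmonoF' (le_of_lt (by simpa using hx))
      have := hmono (Set.mem_Iic.2 hh.le) (Set.self_mem_Iic) hh.le
      linarith [hF0 ▸ this]
  have : Real.log (1 - p + p * Real.exp h) ≤ h ^ 2 / 8 + p * h := by
    simp only [hF] at key; linarith
  linarith


lemma hD_pos' (p : ℝ) (hp0 : 0 ≤ p) (hp1 : p ≤ 1) (x : ℝ) :
    0 < 1 - p + p * Real.exp x := by
  rcases lt_or_ge p 1 with h | h
  · have : 0 ≤ p * Real.exp x := mul_nonneg hp0 (exp_pos x).le
    linarith
  · have hp : p = 1 := le_antisymm hp1 h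
    subst hp; simpa using exp_pos x

lemma aux_exp_comb (p h : ℝ) (hp0 : 0 ≤ p) (hp1 : p ≤ 1) :
    (1 - p) * Real.exp (-p * h) + p * Real.exp ((1 - p) * h) ≤ Real.exp (h ^ 2 / 8) := by
  have hD := hD_pos' p hp0 hp1 h
  have key : (1 - p) * Real.exp (-p * h) + p * Real.exp ((1 - p) * h)
      = Real.exp (-p * h + Real.log (1 - p + p * Real.exp h)) := by
    rw [Real.exp_add, Real.exp_log hD]
    have : Real.exp ((1 - p) * h) = Real.exp (-p * h) * Real.exp h := by
      rw [← Real.exp_add]; ring_nf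
    rw [this]; ring
  rw [key]
  apply Real.exp_le_exp.2
  have := aux_log_le p hp0 hp1 h
  linarith

/-- Hoeffding's lemma. -/
lemma hoeffding_mgf {Ω : Type*} [MeasurableSpace Ω] (P : Measure Ω) [IsProbabilityMeasure P]
    (Y : Ω → ℝ) (hY : Measurable Y) (α β : ℝ) (hab : α ≤ β)
    (hb : ∀ᵐ ω ∂P, Y ω ∈ Set.Icc α β) (hmean : ∫ ω, Y ω ∂P = 0) (l : ℝ) :
    ∫ ω, Real.exp (l * Y ω) ∂P ≤ Real.exp (l ^ 2 * (β - α) ^ 2 / 8) := by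
  have hYint : Integrable Y P := by
    refine Integrable.mono' (integrable_const (max |α| |β|)) hY.aestronglyMeasurable ?_
    filter_upwards [hb] with ω hω
    rw [Real.norm_eq_abs]
    rcases hω with ⟨h1, h2⟩
    rcases abs_cases (Y ω) with ⟨h3, _⟩ | ⟨h3, _⟩
    · rw [h3]; exact le_trans (le_trans h2 (le_abs_self β)) (le_max_right _ _)
    · rw [h3]; refine le_trans ?_ (le_max_left _ _)
      rw [abs_of_nonpos (by nlinarith)]; linarith
  have hexpint : Integrable (fun ω => Real.exp (l * Y ω)) P := by
    refine Integrable.mono' (integrable_const (Real.exp (|l| * max |α| |β|)))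
      (hY.const_mul l).exp.aestronglyMeasurable ?_
    filter_upwards [hb] with ω hω
    rw [Real.norm_eq_abs, abs_of_pos (exp_pos _), Real.exp_le_exp]
    calc l * Y ω ≤ |l * Y ω| := le_abs_self _
      _ = |l| * |Y ω| := abs_mul _ _
      _ ≤ |l| * max |α| |β| := by
          refine mul_le_mul_of_nonneg_left ?_ (abs_nonneg l)
          rcases hω with ⟨h1, h2⟩
          rcases abs_cases (Y ω) with ⟨h3, _⟩ | ⟨h3, _⟩
          · rw [h3]; exact le_trans (le_trans h2 (le_abs_self β)) (le_max_right _ _)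
          · rw [h3]; refine le_trans ?_ (le_max_left _ _)
            rw [abs_of_nonpos (by nlinarith)]; linarith
  rcases eq_or_lt_of_le hab with rfl | hlt
  · -- α = β : Y = α a.e. and α = 0
    have hY0 : ∀ᵐ ω ∂P, Y ω = α := by
      filter_upwards [hb] with ω hω; exact le_antisymm hω.2 hω.1
    have : ∫ ω, Y ω ∂P = α := by
      rw [integral_congr_ae (g := fun _ => α) hY0, integral_const]; simp
    have hα : α = 0 := by rw [hmean] at this; exact this.symm
    have : ∫ ω, Real.exp (l * Y ω) ∂P = 1 := by
      rw [integral_congr_ae (g := fun _ => 1) (by filter_upwards [hY0] with ω hω; simp [hω, hα])]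
      simp
    rw [this, show l ^ 2 * (α - α) ^ 2 / 8 = 0 by ring, Real.exp_zero]
  · set c := β - α with hc
    have hcpos : 0 < c := by simp [hc]; linarith
    -- α ≤ 0 ≤ β
    have hα0 : α ≤ 0 := by
      have : α ≤ ∫ ω, Y ω ∂P := by
        rw [show α = ∫ _ : Ω, α ∂P by simp]
        exact integral_mono_ae (integrable_const α) hYint
          (by filter_upwards [hb] with ω hω using hω.1)
      linarith [hmean ▸ this]
    have hβ0 : 0 ≤ β := by
      have : ∫ ω, Y ω ∂P ≤ β := by
        rw [show β = ∫ _ : Ω, β ∂P by simp]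
        exact integral_mono_ae hYint (integrable_const β)
          (by filter_upwards [hb] with ω hω using hω.2)
      linarith [hmean ▸ this]
    set p := -α / c with hp
    have hp0 : 0 ≤ p := by
      rw [hp]; apply div_nonneg (by linarith) hcpos.le
    have hp1 : p ≤ 1 := by
      rw [hp, div_le_one hcpos]; linarith
    -- pointwise convexity bound
    have hpt : ∀ᵐ ω ∂P, Real.exp (l * Y ω)
        ≤ ((β - Y ω) * Real.exp (l * α) + (Y ω - α) * Real.exp (l * β)) / c := by
      filter_upwards [hb] with ω hω
      rcases hω with ⟨h1, h2⟩
      have hu : (0:ℝ) ≤ (β - Y ω) / c := div_nonneg (by linarith) hcpos.le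
      have hv : (0:ℝ) ≤ (Y ω - α) / c := div_nonneg (by linarith) hcpos.le
      have huv : (β - Y ω) / c + (Y ω - α) / c = 1 := by
        field_simp; linarith
      have := convexOn_exp.2 (Set.mem_univ (l * α)) (Set.mem_univ (l * β)) hu hv huv
      simp only [smul_eq_mul] at this
      have harg : (β - Y ω) / c * (l * α) + (Y ω - α) / c * (l * β) = l * Y ω := by
        field_simp; ring
      rw [harg] at this
      calc Real.exp (l * Y ω)
          ≤ (β - Y ω) / c * Real.exp (l * α) + (Y ω - α) / c * Real.exp (l * β) := this
        _ = ((β - Y ω) * Real.exp (l * α) + (Y ω - α) * Real.exp (l * β)) / c := by ring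
    have hrhsint : Integrable
        (fun ω => ((β - Y ω) * Real.exp (l * α) + (Y ω - α) * Real.exp (l * β)) / c) P := by
      apply Integrable.div_const
      exact ((((integrable_const β).sub hYint).mul_const _).add ((hYint.sub (integrable_const α)).mul_const _))
    have hint : ∫ ω, Real.exp (l * Y ω) ∂P
        ≤ (β * Real.exp (l * α) - α * Real.exp (l * β)) / c := by
      calc ∫ ω, Real.exp (l * Y ω) ∂P
          ≤ ∫ ω, ((β - Y ω) * Real.exp (l * α) + (Y ω - α) * Real.exp (l * β)) / c ∂P :=
            integral_mono_ae hexpint hrhsint hpt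
        _ = (β * Real.exp (l * α) - α * Real.exp (l * β)) / c := by
            have hi1 : Integrable (fun a => (β - Y a) * Real.exp (l * α)) P :=
              ((integrable_const β).sub hYint).mul_const _
            have hi2 : Integrable (fun a => (Y a - α) * Real.exp (l * β)) P :=
              (hYint.sub (integrable_const α)).mul_const _
            rw [integral_div]
            congr 1
            rw [integral_add hi1 hi2, integral_mul_const, integral_mul_const,
              integral_sub (integrable_const β) hYint,
              integral_sub hYint (integrable_const α), hmean, integral_const, integral_const]
            simp; ring
    refine le_trans hint ?_
    have hkey := aux_exp_comb p (l * c) hp0 hp1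
    have h1 : (β * Real.exp (l * α) - α * Real.exp (l * β)) / c
        = (1 - p) * Real.exp (-p * (l * c)) + p * Real.exp ((1 - p) * (l * c)) := by
      have e1 : -p * (l * c) = l * α := by rw [hp]; field_simp
      have e2 : (1 - p) * (l * c) = l * β := by rw [hp]; field_simp; ring
      have e3 : (1 - p) = β / c := by rw [hp]; field_simp; ring
      rw [e1, e2, e3, hp]; field_simp; ring
    have h2 : (l * c) ^ 2 / 8 = l ^ 2 * c ^ 2 / 8 := by ring
    rw [h1]
    calc (1 - p) * Real.exp (-p * (l * c)) + p * Real.exp ((1 - p) * (l * c))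
        ≤ Real.exp ((l * c) ^ 2 / 8) := hkey
      _ = Real.exp (l ^ 2 * c ^ 2 / 8) := by rw [h2]

end AuxHoeffding

/-- Hoeffding's maximal inequality. -/
theorem stmt9 {Ω : Type*} [MeasurableSpace Ω] (P : Measure Ω) [IsProbabilityMeasure P]
    (n : ℕ) (hn : 1 ≤ n) (X : ℕ → Ω → ℝ) (hmeas : ∀ i, Measurable (X i))
    (hindep : iIndepFun X P)
    (hident : ∀ i, IdentDistrib (X i) (X 0) P P)
    (μ a b : ℝ) (hab : a ≤ b)
    (hmean : ∀ i, ∫ ω, X i ω ∂P = μ)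
    (hbound : ∀ i, ∀ᵐ ω ∂P, X i ω ∈ Set.Icc a b)
    (t : ℝ) (ht : 0 < t) :
    P {ω | ∃ i ∈ Finset.Icc 1 n, (i : ℝ) * μ + t ≤ ∑ j ∈ Finset.range i, X j ω}
      ≤ ENNReal.ofReal (Real.exp (-(2 * t ^ 2) / (n * (b - a) ^ 2))) := by
  classical
  rcases eq_or_lt_of_le hab with heq | hlt
  · subst heq
    have h0 : -(2 * t ^ 2) / ((n : ℝ) * (a - a) ^ 2) = 0 := by norm_num
    rw [h0, Real.exp_zero, ENNReal.ofReal_one]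
    exact prob_le_one
  set E : Set Ω :=
    {ω | ∃ i ∈ Finset.Icc 1 n, (i : ℝ) * μ + t ≤ ∑ j ∈ Finset.range i, X j ω} with hE
  set c : ℝ := b - a with hc
  have hcpos : 0 < c := by rw [hc]; linarith
  have hnpos : (0 : ℝ) < n := by exact_mod_cast hn
  set l : ℝ := 4 * t / (n * c ^ 2) with hl
  have hlpos : 0 < l := by rw [hl]; positivity
  set M : ℝ := |a| + |b| + |μ| with hM
  have hMnn : 0 ≤ M := by rw [hM]; positivity
  set Y : ℕ → Ω → ℝ := fun j ω => X j ω - μ with hYdef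
  have hYmeas : ∀ j, Measurable (Y j) := fun j => (hmeas j).sub measurable_const
  set T : ℕ → Ω → ℝ := fun k ω => ∑ j ∈ Finset.range k, Y j ω with hTdef
  have hTmeas : ∀ k, Measurable (T k) :=
    fun k => Finset.measurable_sum _ (fun j _ => hYmeas j)
  have hYbd : ∀ j, ∀ᵐ ω ∂P, |Y j ω| ≤ M := by
    intro j
    filter_upwards [hbound j] with ω hω
    rcases hω with ⟨h1, h2⟩
    rw [hYdef, hM]
    have := neg_abs_le a; have := le_abs_self b; have := neg_abs_le μ; have := le_abs_self μ
    rw [abs_le]; constructor <;> simp only [] <;> nlinarith [abs_nonneg a, abs_nonneg b]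
  have hYint : ∀ j, Integrable (Y j) P := by
    intro j
    refine Integrable.mono' (integrable_const M) (hYmeas j).aestronglyMeasurable ?_
    filter_upwards [hYbd j] with ω hω using by rwa [Real.norm_eq_abs]
  have hYmean : ∀ j, ∫ ω, Y j ω ∂P = 0 := by
    intro j
    have hXint : Integrable (X j) P := by
      have := (hYint j).add (integrable_const μ)
      refine this.congr ?_
      filter_upwards with ω; simp [hYdef]
    rw [hYdef]
    rw [integral_sub hXint (integrable_const μ), hmean j, integral_const]
    simp
  have hTbd : ∀ k, ∀ᵐ ω ∂P, |T k ω| ≤ k * M := by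
    intro k
    have : ∀ᵐ ω ∂P, ∀ j, |Y j ω| ≤ M := ae_all_iff.2 hYbd
    filter_upwards [this] with ω hω
    rw [hTdef]
    calc |∑ j ∈ Finset.range k, Y j ω| ≤ ∑ j ∈ Finset.range k, |Y j ω| :=
        Finset.abs_sum_le_sum_abs _ _
      _ ≤ ∑ _j ∈ Finset.range k, M := Finset.sum_le_sum (fun j _ => hω j)
      _ = k * M := by rw [Finset.sum_const, Finset.card_range]; simp
  have hTint : ∀ k, Integrable (T k) P :=
    fun k => integrable_finset_sum _ (fun j _ => hYint j)
  have hTmean : ∀ k, ∫ ω, T k ω ∂P = 0 := by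
    intro k
    rw [hTdef, integral_finset_sum _ (fun j _ => hYint j)]
    simp [hYmean]
  have hexpTint : ∀ k, Integrable (fun ω => Real.exp (l * T k ω)) P := by
    intro k
    refine Integrable.mono' (integrable_const (Real.exp (l * (k * M))))
      ((hTmeas k).const_mul l).exp.aestronglyMeasurable ?_
    filter_upwards [hTbd k] with ω hω
    rw [Real.norm_eq_abs, abs_of_pos (Real.exp_pos _), Real.exp_le_exp]
    exact mul_le_mul_of_nonneg_left (le_trans (le_abs_self _) hω) hlpos.le
  have hTS : ∀ k (ω : Ω), T k ω = (∑ j ∈ Finset.range k, X j ω) - k * μ := by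
    intro k ω
    rw [hTdef]
    simp only [hYdef]
    rw [Finset.sum_sub_distrib, Finset.sum_const, Finset.card_range]
    simp [nsmul_eq_mul]
  have hEeq : E = {ω | ∃ i ∈ Finset.Icc 1 n, t ≤ T i ω} := by
    rw [hE]; ext ω
    simp only [Set.mem_setOf_eq]
    constructor
    · rintro ⟨i, hi, h⟩; exact ⟨i, hi, by rw [hTS]; linarith⟩
    · rintro ⟨i, hi, h⟩; rw [hTS] at h; exact ⟨i, hi, by linarith⟩
  set A : ℕ → Set Ω := fun i => {ω | t ≤ T i ω ∧ ∀ k < i, T k ω < t} with hA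
  have hAmeas : ∀ i, MeasurableSet (A i) := by
    intro i
    have : A i = {ω | t ≤ T i ω} ∩ ⋂ k, ⋂ (_ : k < i), {ω | T k ω < t} := by
      ext ω; simp [hA, Set.mem_iInter]
    rw [this]
    exact (measurableSet_le measurable_const (hTmeas i)).inter
      (MeasurableSet.iInter fun k => MeasurableSet.iInter fun _ =>
        measurableSet_lt (hTmeas k) measurable_const)
  have hdisjA : ∀ i j : ℕ, i < j → Disjoint (A i) (A j) := by
    intro i j h
    rw [Set.disjoint_left]
    rintro ω ⟨h1, _⟩ ⟨_, h2⟩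
    exact absurd h1 (not_le.2 (h2 i h))
  have hdisj : (↑(Finset.Icc 1 n) : Set ℕ).Pairwise (Function.onFun Disjoint A) := by
    intro i _ j _ hij
    rcases lt_or_gt_of_ne hij with h | h
    · exact hdisjA i j h
    · exact (hdisjA j i h).symm
  have hcover : E ⊆ ⋃ i ∈ Finset.Icc 1 n, A i := by
    rw [hEeq]
    rintro ω ⟨i, hi, hti⟩
    have hex : ∃ k, t ≤ T k ω := ⟨i, hti⟩
    have hspec := Nat.find_spec hex
    have hmin : ∀ k < Nat.find hex, T k ω < t := fun k hk => not_le.1 (Nat.find_min hex hk)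
    have hi0le : Nat.find hex ≤ i := Nat.find_min' hex hti
    have h1i0 : 1 ≤ Nat.find hex := by
      by_contra h
      push_neg at h
      have h0 : Nat.find hex = 0 := by omega
      rw [h0] at hspec
      have : T 0 ω = 0 := by rw [hTdef]; simp
      rw [this] at hspec; linarith
    have hmem := Finset.mem_Icc.1 hi
    exact Set.mem_biUnion (Finset.mem_Icc.2 ⟨h1i0, le_trans hi0le hmem.2⟩) ⟨hspec, hmin⟩
  -- the key per-index inequality
  have key : ∀ i ∈ Finset.Icc 1 n, Real.exp (l * t) * (P (A i)).toReal
      ≤ ∫ ω in A i, Real.exp (l * T n ω) ∂P := by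
    intro i hi
    obtain ⟨hi1, hin⟩ := Finset.mem_Icc.1 hi
    set σ : ℕ → (↥(Finset.range i) → ℝ) → ℝ :=
      fun k v => ∑ j ∈ (Finset.range i).attach, if (j : ℕ) < k then v j - μ else 0 with hσdef
    have hσmeas : ∀ k, Measurable (σ k) := by
      intro k
      apply Finset.measurable_sum
      intro j _
      by_cases hk : (j : ℕ) < k
      · simp only [if_pos hk]; exact (measurable_pi_apply j).sub measurable_const
      · simp only [if_neg hk]; exact measurable_const
    have hσT : ∀ k ≤ i, ∀ ω : Ω, σ k (fun j : ↥(Finset.range i) => X j ω) = T k ω := by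
      intro k hk ω
      rw [hσdef]
      simp only []
      rw [Finset.sum_attach (Finset.range i) (fun j => if j < k then X j ω - μ else 0)]
      rw [← Finset.sum_filter]
      have hfil : (Finset.range i).filter (fun j => j < k) = Finset.range k := by
        ext j; simp only [Finset.mem_filter, Finset.mem_range]; omega
      rw [hfil, hTdef]
    set Aset : Set (↥(Finset.range i) → ℝ) := {v | t ≤ σ i v ∧ ∀ k < i, σ k v < t} with hAset
    have hAsetm : MeasurableSet Aset := by
      have : Aset = {v | t ≤ σ i v} ∩ ⋂ k, ⋂ (_ : k < i), {v | σ k v < t} := by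
        ext v; simp [hAset, Set.mem_iInter]
      rw [this]
      exact (measurableSet_le measurable_const (hσmeas i)).inter
        (MeasurableSet.iInter fun k => MeasurableSet.iInter fun _ =>
          measurableSet_lt (hσmeas k) measurable_const)
    set φ : (↥(Finset.range i) → ℝ) → ℝ :=
      Set.indicator Aset (fun v => Real.exp (l * σ i v)) with hφ
    have hφmeas : Measurable φ :=
      Measurable.indicator ((hσmeas i).const_mul l).exp hAsetm
    set ψ : (↥(Finset.Ico i n) → ℝ) → ℝ :=
      fun w => Real.exp (l * ∑ j ∈ (Finset.Ico i n).attach, (w j - μ)) with hψ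
    have hψmeas : Measurable ψ := by
      apply Measurable.exp
      apply Measurable.const_mul
      exact Finset.measurable_sum _ (fun j _ => (measurable_pi_apply j).sub measurable_const)
    have hdisjST : Disjoint (Finset.range i) (Finset.Ico i n) := by
      rw [Finset.disjoint_left]
      intro j hj hj'
      rw [Finset.mem_range] at hj
      rw [Finset.mem_Ico] at hj'
      omega
    have hind0 := hindep.indepFun_finset (Finset.range i) (Finset.Ico i n) hdisjST hmeas
    have hFG := hind0.comp hφmeas hψmeas
    set F : Ω → ℝ := Set.indicator (A i) (fun ω => Real.exp (l * T i ω)) with hF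
    set G : Ω → ℝ := fun ω => Real.exp (l * (T n ω - T i ω)) with hG
    have hφF : (φ ∘ fun ω (j : ↥(Finset.range i)) => X j ω) = F := by
      funext ω
      simp only [Function.comp_apply, hφ, hF]
      have hmem : ((fun j : ↥(Finset.range i) => X j ω) ∈ Aset) ↔ ω ∈ A i := by
        rw [hAset, hA]
        simp only [Set.mem_setOf_eq]
        rw [hσT i le_rfl ω]
        constructor
        · rintro ⟨u, v⟩; exact ⟨u, fun k hk => by rw [← hσT k hk.le ω]; exact v k hk⟩
        · rintro ⟨u, v⟩; exact ⟨u, fun k hk => by rw [hσT k hk.le ω]; exact v k hk⟩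
      by_cases hω : ω ∈ A i
      · rw [Set.indicator_of_mem (hmem.2 hω), Set.indicator_of_mem hω, hσT i le_rfl ω]
      · rw [Set.indicator_of_notMem (fun hm => hω (hmem.1 hm)), Set.indicator_of_notMem hω]
    have hψG : (ψ ∘ fun ω (j : ↥(Finset.Ico i n)) => X j ω) = G := by
      funext ω
      simp only [Function.comp_apply, hψ, hG]
      congr 1
      rw [Finset.sum_attach (Finset.Ico i n) (fun j => X j ω - μ)]
      rw [Finset.sum_Ico_eq_sub _ hin, hTdef]
    rw [hφF, hψG] at hFG
    have hFmeas : Measurable F := by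
      rw [hF]; exact Measurable.indicator ((hTmeas i).const_mul l).exp (hAmeas i)
    have hGmeas : Measurable G := by
      rw [hG]; exact (((hTmeas n).sub (hTmeas i)).const_mul l).exp
    have hFnonneg : 0 ≤ F := fun ω => Set.indicator_nonneg (fun ω _ => (Real.exp_pos _).le) ω
    have hGnonneg : 0 ≤ G := fun ω => (Real.exp_pos _).le
    have hmul : ∫ ω, (F * G) ω ∂P = (∫ ω, F ω ∂P) * ∫ ω, G ω ∂P :=
      IndepFun.integral_mul_eq_mul_integral hFG hFmeas.aestronglyMeasurable hGmeas.aestronglyMeasurable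
    have hFGeq : F * G = Set.indicator (A i) (fun ω => Real.exp (l * T n ω)) := by
      funext ω
      by_cases hω : ω ∈ A i
      · simp only [Pi.mul_apply, hF, hG, Set.indicator_of_mem hω, ← Real.exp_add]
        ring_nf
      · simp only [Pi.mul_apply, hF, Set.indicator_of_notMem hω, zero_mul]
    have hGint : Integrable G P := by
      refine Integrable.mono' (integrable_const (Real.exp (l * (n * M + n * M))))
        hGmeas.aestronglyMeasurable ?_
      filter_upwards [hTbd n, hTbd i] with ω h1 h2
      rw [Real.norm_eq_abs, hG, abs_of_pos (Real.exp_pos _), Real.exp_le_exp]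
      have hiM : (i : ℝ) * M ≤ n * M := by
        have : (i : ℝ) ≤ n := by exact_mod_cast hin
        nlinarith
      have := abs_le.1 h1
      have := abs_le.1 h2
      have : T n ω - T i ω ≤ n * M + n * M := by
        rcases abs_le.1 h1 with ⟨u1, u2⟩
        rcases abs_le.1 h2 with ⟨v1, v2⟩
        linarith
      exact mul_le_mul_of_nonneg_left this hlpos.le
    have hG1 : 1 ≤ ∫ ω, G ω ∂P := by
      have hlinint : Integrable (fun ω => l * (T n ω - T i ω) + 1) P :=
        (((hTint n).sub (hTint i)).const_mul l).add (integrable_const 1)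
      have hpt : ∀ ω, l * (T n ω - T i ω) + 1 ≤ G ω := by
        intro ω
        have := Real.add_one_le_exp (l * (T n ω - T i ω))
        simpa [hG] using this
      have hi1' : Integrable (fun ω => l * (T n ω - T i ω)) P :=
        ((hTint n).sub (hTint i)).const_mul l
      calc (1 : ℝ) = ∫ ω, (l * (T n ω - T i ω) + 1) ∂P := by
            rw [integral_add hi1' (integrable_const 1),
              integral_const_mul, integral_sub (hTint n) (hTint i), hTmean n, hTmean i]
            simp
        _ ≤ ∫ ω, G ω ∂P := integral_mono hlinint hGint hpt
    have hstepA : Real.exp (l * t) * (P (A i)).toReal ≤ ∫ ω, F ω ∂P := by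
      rw [hF, integral_indicator (hAmeas i)]
      have hconst : Real.exp (l * t) * (P (A i)).toReal
          = ∫ _ω in A i, Real.exp (l * t) ∂P := by
        rw [setIntegral_const, smul_eq_mul, measureReal_def]; ring
      rw [hconst]
      refine setIntegral_mono_on (integrableOn_const (measure_ne_top P _))
        ((hexpTint i).integrableOn) (hAmeas i) ?_
      intro ω hω
      exact Real.exp_le_exp.2 (mul_le_mul_of_nonneg_left hω.1 hlpos.le)
    calc Real.exp (l * t) * (P (A i)).toReal ≤ ∫ ω, F ω ∂P := hstepA
      _ ≤ (∫ ω, F ω ∂P) * ∫ ω, G ω ∂P :=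
          le_mul_of_one_le_right (integral_nonneg hFnonneg) hG1
      _ = ∫ ω, (F * G) ω ∂P := hmul.symm
      _ = ∫ ω in A i, Real.exp (l * T n ω) ∂P := by
          rw [hFGeq, integral_indicator (hAmeas i)]
  -- mgf bound
  have hmgf : ∫ ω, Real.exp (l * T n ω) ∂P ≤ Real.exp ((n : ℝ) * (l ^ 2 * c ^ 2 / 8)) := by
    have hYindep : iIndepFun Y P :=
      hindep.comp (fun _ => fun x : ℝ => x - μ) (fun _ => measurable_id.sub measurable_const)
    have hTn : (fun ω => Real.exp (l * T n ω))
        = fun ω => Real.exp (l * (∑ j ∈ Finset.range n, Y j) ω) := by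
      funext ω
      rw [hTdef]
      simp [Finset.sum_apply]
    have h1 : ∫ ω, Real.exp (l * T n ω) ∂P = mgf (∑ j ∈ Finset.range n, Y j) P l := by
      rw [hTn]; rfl
    rw [h1, iIndepFun.mgf_sum hYindep hYmeas]
    have hbd : ∀ j ∈ Finset.range n, mgf (Y j) P l ≤ Real.exp (l ^ 2 * c ^ 2 / 8) := by
      intro j _
      have hbds : ∀ᵐ ω ∂P, Y j ω ∈ Set.Icc (a - μ) (b - μ) := by
        filter_upwards [hbound j] with ω hω
        exact ⟨by rw [hYdef]; simp; linarith [hω.1], by rw [hYdef]; simp; linarith [hω.2]⟩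
      have := hoeffding_mgf P (Y j) (hYmeas j) (a - μ) (b - μ) (by linarith) hbds (hYmean j) l
      have hceq : (b - μ - (a - μ)) = c := by rw [hc]; ring
      rw [hceq] at this
      exact this
    calc ∏ j ∈ Finset.range n, mgf (Y j) P l
        ≤ ∏ _j ∈ Finset.range n, Real.exp (l ^ 2 * c ^ 2 / 8) :=
          Finset.prod_le_prod (fun j _ => mgf_nonneg) hbd
      _ = Real.exp (l ^ 2 * c ^ 2 / 8) ^ n := by rw [Finset.prod_const, Finset.card_range]
      _ = Real.exp ((n : ℝ) * (l ^ 2 * c ^ 2 / 8)) := by rw [← Real.exp_nat_mul]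
  -- assembly
  have hsum : P E ≤ ∑ i ∈ Finset.Icc 1 n, P (A i) :=
    (measure_mono hcover).trans (measure_biUnion_finset_le _ _)
  have hfin : ∀ i ∈ Finset.Icc 1 n, P (A i) ≠ ⊤ := fun i _ => measure_ne_top P _
  have hq : (P E).toReal ≤ ∑ i ∈ Finset.Icc 1 n, (P (A i)).toReal := by
    rw [← ENNReal.toReal_sum hfin]
    exact ENNReal.toReal_mono (ENNReal.sum_ne_top.2 hfin) hsum
  have hmain : Real.exp (l * t) * (P E).toReal ≤ Real.exp ((n : ℝ) * (l ^ 2 * c ^ 2 / 8)) := by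
    calc Real.exp (l * t) * (P E).toReal
        ≤ Real.exp (l * t) * ∑ i ∈ Finset.Icc 1 n, (P (A i)).toReal :=
          mul_le_mul_of_nonneg_left hq (Real.exp_pos _).le
      _ = ∑ i ∈ Finset.Icc 1 n, Real.exp (l * t) * (P (A i)).toReal := Finset.mul_sum _ _ _
      _ ≤ ∑ i ∈ Finset.Icc 1 n, ∫ ω in A i, Real.exp (l * T n ω) ∂P := Finset.sum_le_sum key
      _ = ∫ ω in ⋃ i ∈ Finset.Icc 1 n, A i, Real.exp (l * T n ω) ∂P :=
          (integral_biUnion_finset _ (fun i _ => hAmeas i) hdisj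
            (fun i _ => (hexpTint n).integrableOn)).symm
      _ ≤ ∫ ω, Real.exp (l * T n ω) ∂P :=
          setIntegral_le_integral (hexpTint n) (ae_of_all _ fun ω => (Real.exp_pos _).le)
      _ ≤ _ := hmgf
  have harith : (n : ℝ) * (l ^ 2 * c ^ 2 / 8) - l * t = -(2 * t ^ 2) / (n * c ^ 2) := by
    rw [hl]
    field_simp
    ring
  have hfinal : (P E).toReal ≤ Real.exp (-(2 * t ^ 2) / ((n : ℝ) * c ^ 2)) := by
    rw [← harith, Real.exp_sub, le_div_iff₀ (Real.exp_pos _), mul_comm]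
    exact hmain
  calc P E = ENNReal.ofReal (P E).toReal := (ENNReal.ofReal_toReal (measure_ne_top P E)).symm
    _ ≤ ENNReal.ofReal (Real.exp (-(2 * t ^ 2) / ((n : ℝ) * c ^ 2))) :=
        ENNReal.ofReal_le_ofReal hfinal
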